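/- Let C ⊆ S_w be a connected configuration whose boundary positions are all nodes, and let v' ∈ C be a node not contained in any maximal barrier of C. Then the graph distance in C from the corner (0,0) to v' equals the Manhattan distance d_MH((0,0), v'); i.e., there is a monotone (north/east-step) path in C from (0,0) to v'. -/

import Mathlib

def Sq (w : ℤ) : Set (ℤ × ℤ) := {p | 0 ≤ p.1 ∧ p.1 ≤ w ∧ 0 ≤ p.2 ∧ p.2 ≤ w}

def dMH (p q : ℤ × ℤ) : ℤ := |p.1 - q.1| + |p.2 - q.2|

/-- An axis-aligned rectangle in ℤ². -/
def IsRect (R : Set (ℤ × ℤ)) : Prop :=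
  ∃ x₀ x₁ y₀ y₁ : ℤ, x₀ ≤ x₁ ∧ y₀ ≤ y₁ ∧
    R = {p : ℤ × ℤ | x₀ ≤ p.1 ∧ p.1 ≤ x₁ ∧ y₀ ≤ p.2 ∧ p.2 ≤ y₁}

/-- A barrier of a configuration `C` in the square `S_w`: a nonempty rectangle
contained in `S_w` each of whose columns and rows contains a hole
(a position of `S_w` not in `C`). -/
def IsBarrier (w : ℤ) (C R : Set (ℤ × ℤ)) : Prop :=
  R.Nonempty ∧ IsRect R ∧ R ⊆ Sq w ∧
    (∀ c : ℤ, (∃ p ∈ R, p.1 = c) → ∃ p ∈ R, p.1 = c ∧ p ∉ C) ∧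
    (∀ r : ℤ, (∃ p ∈ R, p.2 = r) → ∃ p ∈ R, p.2 = r ∧ p ∉ C)

/-- A maximal barrier: a barrier not properly contained in another barrier. -/
def IsMaxBarrier (w : ℤ) (C R : Set (ℤ × ℤ)) : Prop :=
  IsBarrier w C R ∧ ∀ R', IsBarrier w C R' → R ⊆ R' → R' = R

/-- A path of length `n` inside `C` from `u` to `v`. -/
def IsPathIn (C : Set (ℤ × ℤ)) (n : ℕ) (P : ℕ → ℤ × ℤ) (u v : ℤ × ℤ) : Prop :=
  P 0 = u ∧ P n = v ∧ (∀ i < n, dMH (P i) (P (i + 1)) = 1) ∧ ∀ i ≤ n, P i ∈ C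

/-- Graph distance within the configuration `C`. -/
noncomputable def gdist (C : Set (ℤ × ℤ)) (u v : ℤ × ℤ) : ℕ :=
  sInf {n : ℕ | ∃ P : ℕ → ℤ × ℤ, IsPathIn C n P u v}

-- auxiliary development
lemma dMH_triangle (a b c : ℤ × ℤ) : dMH a c ≤ dMH a b + dMH b c := by
  unfold dMH
  have h1 := abs_sub_le a.1 b.1 c.1
  have h2 := abs_sub_le a.2 b.2 c.2
  linarith

lemma path_len_ge (C : Set (ℤ × ℤ)) :
    ∀ (n : ℕ) (P : ℕ → ℤ × ℤ) (u v : ℤ × ℤ), IsPathIn C n P u v → dMH u v ≤ (n : ℤ) := by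
  intro n
  induction n with
  | zero =>
    rintro P u v ⟨h0, hn, -, -⟩
    rw [h0] at hn
    subst hn
    simp [dMH]
  | succ n IH =>
    rintro P u v ⟨h0, hn, hs, hm⟩
    have h1 : IsPathIn C n P u (P n) :=
      ⟨h0, rfl, fun i hi => hs i (Nat.lt_succ_of_lt hi), fun i hi => hm i (Nat.le_succ_of_le hi)⟩
    have h2 := IH P u (P n) h1
    have h3 := hs n (Nat.lt_succ_self n)
    rw [hn] at h3
    have h4 := dMH_triangle u (P n) v
    push_cast
    linarith

def MReach (C : Set (ℤ × ℤ)) (v : ℤ × ℤ) : Prop :=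
  ∃ (n : ℕ) (P : ℕ → ℤ × ℤ), IsPathIn C n P (0, 0) v ∧ (n : ℤ) = v.1 + v.2

lemma MReach_zero {C : Set (ℤ × ℤ)} (h : ((0:ℤ),(0:ℤ)) ∈ C) : MReach C (0,0) :=
  ⟨0, fun _ => (0,0), ⟨rfl, rfl, fun i hi => absurd hi (Nat.not_lt_zero i), fun _ _ => h⟩, by simp⟩

lemma MReach_step {C : Set (ℤ × ℤ)} {u v : ℤ × ℤ} (h : MReach C u) (hv : v ∈ C)
    (hd : dMH u v = 1) (hsum : v.1 + v.2 = u.1 + u.2 + 1) : MReach C v := by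
  obtain ⟨n, P, ⟨h0, hn, hs, hm⟩, hlen⟩ := h
  refine ⟨n + 1, fun i => if i ≤ n then P i else v, ⟨?_, ?_, ?_, ?_⟩, ?_⟩
  · simpa using h0
  · simp
  · intro i hi
    by_cases hin : i < n
    · have e1 : i ≤ n := Nat.le_of_lt hin
      have e2 : i + 1 ≤ n := hin
      simp only [e1, e2, if_true]
      exact hs i hin
    · have hieq : i = n := by omega
      subst hieq
      have e2 : ¬ (i + 1 ≤ i) := by omega
      simp only [le_refl, if_true, e2, if_false]
      rw [hn]
      exact hd
  · intro i hi
    by_cases hin : i ≤ n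
    · simpa [hin] using hm i hin
    · simp [hin, hv]
  · push_cast
    omega

lemma MReach_right {C : Set (ℤ × ℤ)} {u : ℤ × ℤ} (h : MReach C u)
    (hv : ((u.1 + 1, u.2) : ℤ × ℤ) ∈ C) : MReach C (u.1 + 1, u.2) :=
  MReach_step h hv (by simp [dMH]) (by ring)

lemma MReach_up {C : Set (ℤ × ℤ)} {u : ℤ × ℤ} (h : MReach C u)
    (hv : ((u.1, u.2 + 1) : ℤ × ℤ) ∈ C) : MReach C (u.1, u.2 + 1) :=
  MReach_step h hv (by simp [dMH]) (by ring)

inductive Dep (C : Set (ℤ × ℤ)) (v' : ℤ × ℤ) : ℤ × ℤ → Prop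
  | start : Dep C v' v'
  | left (p : ℤ × ℤ) : Dep C v' p → p ∈ C → 1 ≤ p.1 → Dep C v' (p.1 - 1, p.2)
  | down (p : ℤ × ℤ) : Dep C v' p → p ∈ C → 1 ≤ p.2 → Dep C v' (p.1, p.2 - 1)

lemma Dep_bounds {C : Set (ℤ × ℤ)} {v' : ℤ × ℤ} (h1 : 0 ≤ v'.1) (h2 : 0 ≤ v'.2) :
    ∀ p, Dep C v' p → 0 ≤ p.1 ∧ p.1 ≤ v'.1 ∧ 0 ≤ p.2 ∧ p.2 ≤ v'.2 := by
  intro p hp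
  induction hp with
  | start => exact ⟨h1, le_refl _, h2, le_refl _⟩
  | left p hp hC hx IH =>
    refine ⟨by omega, ?_, ?_, ?_⟩ <;> simp only [] <;> omega
  | down p hp hC hy IH =>
    refine ⟨?_, ?_, by omega, ?_⟩ <;> simp only [] <;> omega

lemma Dep_blocked {C : Set (ℤ × ℤ)} {v' : ℤ × ℤ} (h : ¬ MReach C v') :
    ∀ p, Dep C v' p → ¬ MReach C p := by
  intro p hp
  induction hp with
  | start => exact h
  | left p hp hC hx IH =>
    intro hr
    have e : ((p.1 - 1 : ℤ) + 1, p.2) = p := by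
      ext <;> simp <;> omega
    exact IH (e ▸ MReach_right hr (by rw [e]; exact hC))
  | down p hp hC hy IH =>
    intro hr
    have e : ((p.1 : ℤ), p.2 - 1 + 1) = p := by
      ext <;> simp <;> omega
    exact IH (e ▸ MReach_up hr (by rw [e]; exact hC))

lemma Dep_col {C : Set (ℤ × ℤ)} {v' : ℤ × ℤ} :
    ∀ p, Dep C v' p → ∀ c, p.1 ≤ c → c ≤ v'.1 → ∃ q, Dep C v' q ∧ q.1 = c := by
  intro p hp
  induction hp with
  | start =>
    intro c h1 h2
    exact ⟨v', Dep.start, le_antisymm h1 h2⟩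
  | left p hp hC hx IH =>
    intro c h1 h2
    by_cases hc : p.1 ≤ c
    · exact IH c hc h2
    · have hce : c = p.1 - 1 := by
        simp only [] at h1; omega
      exact ⟨(p.1 - 1, p.2), Dep.left p hp hC hx, hce.symm⟩
  | down p hp hC hy IH =>
    intro c h1 h2
    exact IH c h1 h2

lemma Dep_row {C : Set (ℤ × ℤ)} {v' : ℤ × ℤ} :
    ∀ p, Dep C v' p → ∀ r, p.2 ≤ r → r ≤ v'.2 → ∃ q, Dep C v' q ∧ q.2 = r := by
  intro p hp
  induction hp with
  | start =>
    intro r h1 h2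
    exact ⟨v', Dep.start, le_antisymm h1 h2⟩
  | left p hp hC hx IH =>
    intro r h1 h2
    exact IH r h1 h2
  | down p hp hC hy IH =>
    intro r h1 h2
    by_cases hr : p.2 ≤ r
    · exact IH r hr h2
    · have hre : r = p.2 - 1 := by
        simp only [] at h1; omega
      exact ⟨(p.1, p.2 - 1), Dep.down p hp hC hy, hre.symm⟩

lemma Sq_finite (w : ℤ) : (Sq w).Finite := by
  have h : Sq w = Set.Icc ((0:ℤ), (0:ℤ)) (w, w) := by
    ext p
    simp [Sq, Set.mem_Icc, Prod.le_def]
    tauto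
  rw [h]
  exact Set.finite_Icc _ _

lemma exists_maxBarrier {w : ℤ} {C R : Set (ℤ × ℤ)} (h : IsBarrier w C R) :
    ∃ M, IsMaxBarrier w C M ∧ R ⊆ M := by
  have hfin : {T : Set (ℤ × ℤ) | IsBarrier w C T ∧ R ⊆ T}.Finite :=
    ((Sq_finite w).finite_subsets).subset (fun T hT => hT.1.2.2.1)
  obtain ⟨M, hM, hmax⟩ := hfin.exists_maximalFor id _ ⟨R, h, subset_rfl⟩
  exact ⟨M, ⟨hM.1, fun R' hR' hsub => le_antisymm (hmax ⟨hR', hM.2.trans hsub⟩ hsub) hsub⟩, hM.2⟩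

/-- For a connected configuration whose boundary consists of nodes, the graph
distance from the corner (0,0) to any node not in a maximal barrier equals
the Manhattan distance. -/
theorem stmt10 (w : ℤ) (hw : 0 ≤ w) (C : Set (ℤ × ℤ)) (hC : C ⊆ Sq w)
    (hconn : ∀ u ∈ C, ∀ v ∈ C, ∃ (n : ℕ) (P : ℕ → ℤ × ℤ), IsPathIn C n P u v)
    (hbd : ∀ p ∈ Sq w, (p.1 = 0 ∨ p.1 = w ∨ p.2 = 0 ∨ p.2 = w) → p ∈ C)
    (v' : ℤ × ℤ) (hv' : v' ∈ C)
    (hfree : ∀ M, IsMaxBarrier w C M → v' ∉ M) :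
    (gdist C (0, 0) v' : ℤ) = dMH (0, 0) v' := by
  have h00 : ((0:ℤ),(0:ℤ)) ∈ C := hbd (0,0) ⟨le_refl _, hw, le_refl _, hw⟩ (Or.inl rfl)
  obtain ⟨hx0, hxw, hy0, hyw⟩ := hC hv'
  -- bottom row and left column are reachable by monotone paths
  have hbot : ∀ x : ℤ, 0 ≤ x → x ≤ w → MReach C (x, 0) := by
    refine Int.le_induction ?_ ?_
    · intro _; exact MReach_zero h00
    · intro x hx IH hxw'
      have h1 : MReach C (x, 0) := IH (by omega)
      have h2 : ((x + 1 : ℤ), (0:ℤ)) ∈ C :=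
        hbd _ ⟨by omega, by omega, le_refl _, hw⟩ (Or.inr (Or.inr (Or.inl rfl)))
      exact MReach_right h1 h2
  have hleftc : ∀ y : ℤ, 0 ≤ y → y ≤ w → MReach C (0, y) := by
    refine Int.le_induction ?_ ?_
    · intro _; exact MReach_zero h00
    · intro y hy IH hyw'
      have h1 : MReach C (0, y) := IH (by omega)
      have h2 : ((0:ℤ), (y + 1 : ℤ)) ∈ C :=
        hbd _ ⟨le_refl _, hw, by omega, by omega⟩ (Or.inl rfl)
      exact MReach_up h1 h2
  -- main claim: v' is reachable by a monotone path
  have hM : MReach C v' := by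
    by_contra hnr
    have hB := Dep_blocked (C := C) (v' := v') hnr
    have hbds := Dep_bounds (C := C) (v' := v') hx0 hy0
    -- least column occupied by Dep
    obtain ⟨x₀, ⟨qx, hqx, hqxc⟩, hx₀least⟩ :=
      Int.exists_least_of_bdd (P := fun c => ∃ q, Dep C v' q ∧ q.1 = c)
        ⟨0, fun z ⟨q, hq, hqc⟩ => hqc ▸ (hbds q hq).1⟩ ⟨v'.1, v', Dep.start, rfl⟩
    obtain ⟨y₀, ⟨qy, hqy, hqyc⟩, hy₀least⟩ :=
      Int.exists_least_of_bdd (P := fun r => ∃ q, Dep C v' q ∧ q.2 = r)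
        ⟨0, fun z ⟨q, hq, hqc⟩ => hqc ▸ (hbds q hq).2.2.1⟩ ⟨v'.2, v', Dep.start, rfl⟩
    have hx₀v : x₀ ≤ v'.1 := hx₀least v'.1 ⟨v', Dep.start, rfl⟩
    have hy₀v : y₀ ≤ v'.2 := hy₀least v'.2 ⟨v', Dep.start, rfl⟩
    have hx₀0 : 0 ≤ x₀ := hqxc ▸ (hbds qx hqx).1
    have hy₀0 : 0 ≤ y₀ := hqyc ▸ (hbds qy hqy).2.2.1
    set R : Set (ℤ × ℤ) := {p | x₀ ≤ p.1 ∧ p.1 ≤ v'.1 ∧ y₀ ≤ p.2 ∧ p.2 ≤ v'.2} with hR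
    -- every column of R contains a hole
    have hcol : ∀ c, x₀ ≤ c → c ≤ v'.1 → ∃ p ∈ R, p.1 = c ∧ p ∉ C := by
      intro c hc1 hc2
      obtain ⟨q, hq, hqc⟩ := Dep_col qx hqx c (by omega) hc2
      obtain ⟨m, hm, hmleast⟩ :=
        Int.exists_least_of_bdd (P := fun y => Dep C v' (c, y))
          ⟨0, fun z hz => (hbds _ hz).2.2.1⟩
          ⟨q.2, by rw [← hqc]; exact hq⟩
      have hmy₀ : y₀ ≤ m := hy₀least m ⟨(c, m), hm, rfl⟩
      refine ⟨(c, m), ⟨hc1, hc2, hmy₀, (hbds _ hm).2.2.2⟩, rfl, ?_⟩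
      intro hCm
      by_cases h1m : 1 ≤ m
      · have hd : Dep C v' (c, m - 1) := Dep.down (c, m) hm hCm h1m
        have := hmleast (m - 1) hd
        omega
      · have hm0 : m = 0 := by
          have := (hbds _ hm).2.2.1
          omega
        subst hm0
        exact hB _ hm (hbot c (by omega) (by omega))
    have hrow : ∀ r, y₀ ≤ r → r ≤ v'.2 → ∃ p ∈ R, p.2 = r ∧ p ∉ C := by
      intro r hr1 hr2
      obtain ⟨q, hq, hqr⟩ := Dep_row qy hqy r (by omega) hr2
      obtain ⟨m, hm, hmleast⟩ :=
        Int.exists_least_of_bdd (P := fun x => Dep C v' (x, r))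
          ⟨0, fun z hz => (hbds _ hz).1⟩
          ⟨q.1, by rw [← hqr]; exact hq⟩
      have hmx₀ : x₀ ≤ m := hx₀least m ⟨(m, r), hm, rfl⟩
      refine ⟨(m, r), ⟨hmx₀, (hbds _ hm).2.1, hr1, hr2⟩, rfl, ?_⟩
      intro hCm
      by_cases h1m : 1 ≤ m
      · have hd : Dep C v' (m - 1, r) := Dep.left (m, r) hm hCm h1m
        have := hmleast (m - 1) hd
        omega
      · have hm0 : m = 0 := by
          have := (hbds _ hm).1
          omega
        subst hm0
        exact hB _ hm (hleftc r (by omega) (by omega))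
    have hvR : v' ∈ R := ⟨hx₀v, le_refl _, hy₀v, le_refl _⟩
    have hbar : IsBarrier w C R := by
      refine ⟨⟨v', hvR⟩, ⟨x₀, v'.1, y₀, v'.2, hx₀v, hy₀v, rfl⟩, ?_, ?_, ?_⟩
      · rintro p ⟨h1, h2, h3, h4⟩
        exact ⟨by omega, by omega, by omega, by omega⟩
      · rintro c ⟨p, ⟨h1, h2, h3, h4⟩, hpc⟩
        exact hcol c (by omega) (by omega)
      · rintro r ⟨p, ⟨h1, h2, h3, h4⟩, hpr⟩
        exact hrow r (by omega) (by omega)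
    obtain ⟨M, hMmax, hRM⟩ := exists_maxBarrier hbar
    exact hfree M hMmax (hRM hvR)
  -- conclude
  obtain ⟨n, P, hP, hn⟩ := hM
  have hdm : dMH (0, 0) v' = v'.1 + v'.2 := by
    show |(0:ℤ) - v'.1| + |(0:ℤ) - v'.2| = v'.1 + v'.2
    rw [zero_sub, zero_sub, abs_neg, abs_neg, abs_of_nonneg hx0, abs_of_nonneg hy0]
  have hne : {k : ℕ | ∃ Q : ℕ → ℤ × ℤ, IsPathIn C k Q (0, 0) v'}.Nonempty := ⟨n, P, hP⟩
  have h1 : gdist C (0, 0) v' ≤ n := Nat.sInf_le ⟨P, hP⟩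
  obtain ⟨P', hP'⟩ := Nat.sInf_mem hne
  have h2 : dMH (0, 0) v' ≤ (gdist C (0, 0) v' : ℤ) :=
    path_len_ge C (gdist C (0, 0) v') P' (0, 0) v' hP'
  have h3 : (gdist C (0, 0) v' : ℤ) ≤ (n : ℤ) := by exact_mod_cast h1
  omega
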